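/- Let K be a μ-continuous Chomsky algebra and σ : T X → K an interpretation over K. Then for every μ-expression t ∈ T X, the supremum sup{σ̄(w) : w ∈ L_X(t)} exists in K and equals σ(t). -/

import Mathlib

/-- μ-expressions over a set `X` of variables:
`t ::= x | t + t | t·t | 0 | 1 | μx.t`. -/
inductive MuTerm (X : Type) : Type
  | var : X → MuTerm X
  | zero : MuTerm X
  | one : MuTerm X
  | add : MuTerm X → MuTerm X → MuTerm X
  | mul : MuTerm X → MuTerm X → MuTerm X
  | mu : X → MuTerm X → MuTerm X

namespace MuTerm

variable {X : Type}

/-- Size of a term (used for termination of substitution). -/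
def size : MuTerm X → ℕ
  | var _ => 1
  | zero => 1
  | one => 1
  | add s t => size s + size t + 1
  | mul s t => size s + size t + 1
  | mu _ t => size t + 1

variable [DecidableEq X]

/-- Free variables of a μ-expression. -/
def fv : MuTerm X → Finset X
  | var x => {x}
  | zero => ∅
  | one => ∅
  | add s t => fv s ∪ fv t
  | mul s t => fv s ∪ fv t
  | mu x t => fv t \ {x}

/-- All (free and bound) variables of a μ-expression. -/
def vars : MuTerm X → Finset X
  | var x => {x}
  | zero => ∅
  | one => ∅
  | add s t => vars s ∪ vars t
  | mul s t => vars s ∪ vars t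
  | mu x t => insert x (vars t)

/-- Rename free occurrences of the variable `y` to `z`. -/
def rename (y z : X) : MuTerm X → MuTerm X
  | var x => if x = y then var z else var x
  | zero => zero
  | one => one
  | add s t => add (rename y z s) (rename y z t)
  | mul s t => mul (rename y z s) (rename y z t)
  | mu x t => if x = y then mu x t else mu x (rename y z t)

theorem size_rename (y z : X) : ∀ t : MuTerm X, (rename y z t).size = t.size
  | var x => by simp only [rename]; split <;> rfl
  | zero => rfl
  | one => rfl
  | add s t => by simp [rename, size, size_rename y z s, size_rename y z t]
  | mul s t => by simp [rename, size, size_rename y z s, size_rename y z t]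
  | mu x t => by
      simp only [rename]; split
      · rfl
      · simp [size, size_rename y z t]

variable [Infinite X]

/-- Capture-avoiding substitution `t[x := u]`: substitute `u` for the free
occurrences of `x` in the last argument, renaming bound variables to fresh
ones to avoid capture. -/
noncomputable def subst (x : X) (u : MuTerm X) : MuTerm X → MuTerm X
  | var y => if y = x then u else var y
  | zero => zero
  | one => one
  | add s t => add (subst x u s) (subst x u t)
  | mul s t => mul (subst x u s) (subst x u t)
  | mu y t =>
    if y = x then mu y t
    else
      let z : X := Classical.choose (Infinite.exists_notMem_finset (vars t ∪ fv u ∪ {x}))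
      mu z (subst x u (rename y z t))
  termination_by t => size t
  decreasing_by
    all_goals simp only [size, size_rename]
    all_goals omega

/-- The `n`-th approximant `nx.t`: `0x.t = 0`, `(n+1)x.t = t[x := nx.t]`. -/
noncomputable def napprox : ℕ → X → MuTerm X → MuTerm X
  | 0, _, _ => zero
  | n + 1, x, t => subst x (napprox n x t) t

end MuTerm

/-- Polynomial functions over a semiring `C` in `n` indeterminates: functions
built from constants in `C`, projections, addition, and multiplication. -/
inductive IsPolyFun {C : Type} [Semiring C] : {n : ℕ} → ((Fin n → C) → C) → Prop
  | const {n : ℕ} (c : C) : IsPolyFun fun _ : Fin n → C => c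
  | proj {n : ℕ} (i : Fin n) : IsPolyFun fun v => v i
  | add {n : ℕ} {p q : (Fin n → C) → C} :
      IsPolyFun p → IsPolyFun q → IsPolyFun fun v => p v + q v
  | mul {n : ℕ} {p q : (Fin n → C) → C} :
      IsPolyFun p → IsPolyFun q → IsPolyFun fun v => p v * q v

/-- A Chomsky algebra is an idempotent semiring (ordered by `a ≤ b ↔ a + b = b`)
in which every finite system of polynomial inequalities `pᵢ ≤ xᵢ` has a least
solution. -/
class ChomskyAlgebra (C : Type) extends IdemSemiring C where
  algClosed : ∀ {n : ℕ} (p : Fin n → (Fin n → C) → C), (∀ i, IsPolyFun (p i)) →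
    ∃ sol : Fin n → C, (∀ i, p i sol ≤ sol i) ∧
      ∀ τ : Fin n → C, (∀ i, p i τ ≤ τ i) → ∀ i, sol i ≤ τ i

/-- `IsInterp eval` says that `eval` is the family of interpretations of
μ-expressions over the Chomsky algebra `C`, one for each valuation `v : X → C`:
each `eval v` is a homomorphism with respect to the semiring operations, and
`eval v (μx.t)` is the least `a` with `eval v[x↦a] t ≤ a`. -/
structure IsInterp {X C : Type} [DecidableEq X] [Infinite X] [ChomskyAlgebra C]
    (eval : (X → C) → MuTerm X → C) : Prop where
  var : ∀ (v : X → C) (x : X), eval v (.var x) = v x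
  zero : ∀ v, eval v .zero = 0
  one : ∀ v, eval v .one = 1
  add : ∀ v s t, eval v (.add s t) = eval v s + eval v t
  mul : ∀ v s t, eval v (.mul s t) = eval v s * eval v t
  mu : ∀ (v : X → C) (x : X) (t : MuTerm X),
    IsLeast {a : C | eval (Function.update v x a) t ≤ a} (eval v (.mu x t))

/-- A Chomsky algebra `C` is μ-continuous if for every interpretation `σ` over
`C`, all `c, d ∈ C`, and every term `t`,
`c·σ(μx.t)·d = sup_{n ≥ 0} c·σ(nx.t)·d` (in particular the supremum exists). -/
def MuContinuous (C : Type) [ChomskyAlgebra C] : Prop :=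
  ∀ (X : Type) [DecidableEq X] [Infinite X] (eval : (X → C) → MuTerm X → C),
    IsInterp eval → ∀ (v : X → C) (c d : C) (x : X) (t : MuTerm X),
      IsLUB (Set.range fun n : ℕ => c * eval v (MuTerm.napprox n x t) * d)
        (c * eval v (.mu x t) * d)

/-- A language interpretation `τ : T X → P(Y*)`: a homomorphism for the
semiring operations on languages with `τ(μx.t) = ⋃ n, τ(nx.t)`. -/
structure IsLangInterp {X Y : Type} [DecidableEq X] [Infinite X]
    (τ : MuTerm X → Language Y) : Prop where
  zero : τ .zero = 0
  one : τ .one = 1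
  add : ∀ s t, τ (.add s t) = τ s + τ t
  mul : ∀ s t, τ (.mul s t) = τ s * τ t
  mu : ∀ (x : X) (t : MuTerm X), τ (.mu x t) = ⨆ n : ℕ, τ (MuTerm.napprox n x t)

/-- The canonical interpretation `L_X : T X → P(X*)`: the language
interpretation with `L_X(x) = {x}`. -/
def IsCanonicalInterp {X : Type} [DecidableEq X] [Infinite X]
    (L : MuTerm X → Language X) : Prop :=
  IsLangInterp L ∧ ∀ x : X, L (.var x) = {[x]}

/-- For a word `w = x₁⋯x_k ∈ X*` and `σ : X → K`, `wordProd σ w` is the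
product `σ(x₁)⋯σ(x_k)` in `K`, with the empty word mapped to `1`. -/
def wordProd {X K : Type} [Monoid K] (σ : X → K) (w : List X) : K :=
  (w.map σ).prod

/-- `IsLangEval E` says that `E` is the family of structurally induced language
interpretations, one for each assignment `σ : X → P(Y*)` of languages to
variables: each `E σ` is a homomorphism for the semiring operations on
languages, with `E σ (μx.t) = ⋃ n, E σ (nx.t)`. -/
structure IsLangEval {X Y : Type} [DecidableEq X] [Infinite X]
    (E : (X → Language Y) → MuTerm X → Language Y) : Prop where
  var : ∀ (σ : X → Language Y) (x : X), E σ (.var x) = σ x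
  zero : ∀ σ, E σ .zero = 0
  one : ∀ σ, E σ .one = 1
  add : ∀ σ s t, E σ (.add s t) = E σ s + E σ t
  mul : ∀ σ s t, E σ (.mul s t) = E σ s * E σ t
  mu : ∀ (σ : X → Language Y) (x : X) (t : MuTerm X),
    E σ (.mu x t) = ⨆ n : ℕ, E σ (MuTerm.napprox n x t)

/-! ### Auxiliary development: an ordinal measure on μ-terms -/

namespace MuTerm

variable {X : Type} [DecidableEq X]

theorem fv_subset_vars : ∀ t : MuTerm X, fv t ⊆ vars t
  | var x => by simp [fv, vars]
  | zero => by simp [fv, vars]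
  | one => by simp [fv, vars]
  | add s t => by
      simp only [fv, vars]
      exact Finset.union_subset_union (fv_subset_vars s) (fv_subset_vars t)
  | mul s t => by
      simp only [fv, vars]
      exact Finset.union_subset_union (fv_subset_vars s) (fv_subset_vars t)
  | mu x t => by
      simp only [fv, vars]
      intro y hy
      rw [Finset.mem_sdiff] at hy
      exact Finset.mem_insert_of_mem (fv_subset_vars t hy.1)

variable [Infinite X]

/-- The fresh variable chosen by `subst` in the `mu` case. -/
noncomputable def fresh (t u : MuTerm X) (x : X) : X :=
  Classical.choose (Infinite.exists_notMem_finset (vars t ∪ fv u ∪ {x}))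

theorem fresh_not_mem (t u : MuTerm X) (x : X) :
    fresh t u x ∉ vars t ∪ fv u ∪ {x} :=
  Classical.choose_spec (Infinite.exists_notMem_finset _)

theorem fresh_spec (t u : MuTerm X) (x : X) :
    fresh t u x ∉ vars t ∧ fresh t u x ∉ fv u ∧ fresh t u x ≠ x := by
  have h := fresh_not_mem t u x
  simp only [Finset.mem_union, Finset.mem_singleton, not_or] at h
  exact ⟨h.1.1, h.1.2, h.2⟩

theorem subst_var (x : X) (u : MuTerm X) (y : X) :
    subst x u (var y) = if y = x then u else var y := by rw [subst]

theorem subst_zero (x : X) (u : MuTerm X) : subst x u zero = zero := by rw [subst]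

theorem subst_one (x : X) (u : MuTerm X) : subst x u one = one := by rw [subst]

theorem subst_add (x : X) (u s t : MuTerm X) :
    subst x u (add s t) = add (subst x u s) (subst x u t) := by rw [subst]

theorem subst_mul (x : X) (u s t : MuTerm X) :
    subst x u (mul s t) = mul (subst x u s) (subst x u t) := by rw [subst]

theorem subst_mu_eq (x : X) (u : MuTerm X) (t : MuTerm X) :
    subst x u (mu x t) = mu x t := by rw [subst]; simp

theorem subst_mu_ne (x : X) (u : MuTerm X) (y : X) (t : MuTerm X) (h : y ≠ x) :
    subst x u (mu y t) = mu (fresh t u x) (subst x u (rename y (fresh t u x) t)) := by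
  rw [subst]
  simp [h, fresh]

theorem napprox_zero (x : X) (t : MuTerm X) : napprox 0 x t = zero := rfl

theorem napprox_succ (n : ℕ) (x : X) (t : MuTerm X) :
    napprox (n + 1) x t = subst x (napprox n x t) t := rfl

/-- Ordinal measure of a μ-term, relative to an environment. -/
noncomputable def oval : MuTerm X → (X → Ordinal) → Ordinal
  | var x, ρ => ρ x
  | zero, _ => 0
  | one, _ => 0
  | add s t, ρ => oval s ρ + oval t ρ + 1
  | mul s t, ρ => oval s ρ + oval t ρ + 1
  | mu x t, ρ => (⨆ n : ℕ, (fun a => oval t (Function.update ρ x a))^[n] 0) + 1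

theorem oval_congr : ∀ (t : MuTerm X) (ρ ρ' : X → Ordinal),
    (∀ y ∈ fv t, ρ y = ρ' y) → oval t ρ = oval t ρ'
  | var x, ρ, ρ', h => h x (by simp [fv])
  | zero, _, _, _ => rfl
  | one, _, _, _ => rfl
  | add s t, ρ, ρ', h => by
      simp only [oval]
      rw [oval_congr s ρ ρ' fun y hy => h y (by simp [fv, hy]),
        oval_congr t ρ ρ' fun y hy => h y (by simp [fv, hy])]
  | mul s t, ρ, ρ', h => by
      simp only [oval]
      rw [oval_congr s ρ ρ' fun y hy => h y (by simp [fv, hy]),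
        oval_congr t ρ ρ' fun y hy => h y (by simp [fv, hy])]
  | mu x t, ρ, ρ', h => by
      simp only [oval]
      have : (fun a => oval t (Function.update ρ x a)) =
          (fun a => oval t (Function.update ρ' x a)) := by
        funext a
        refine oval_congr t _ _ fun y hy => ?_
        by_cases hyx : y = x
        · subst hyx; simp
        · rw [Function.update_of_ne hyx, Function.update_of_ne hyx]
          exact h y (by simp [fv, Finset.mem_sdiff, hy, hyx])
      rw [this]

theorem oval_rename : ∀ (t : MuTerm X) (ρ : X → Ordinal) (y z : X), z ∉ vars t →
    oval (rename y z t) ρ = oval t (Function.update ρ y (ρ z))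
  | var p, ρ, y, z, _ => by
      simp only [rename]
      by_cases hp : p = y
      · subst hp; simp [oval]
      · simp [hp, oval, Function.update_of_ne hp]
  | zero, _, _, _, _ => rfl
  | one, _, _, _, _ => rfl
  | add s t, ρ, y, z, hz => by
      simp only [vars, Finset.mem_union, not_or] at hz
      simp only [rename, oval]
      rw [oval_rename s ρ y z hz.1, oval_rename t ρ y z hz.2]
  | mul s t, ρ, y, z, hz => by
      simp only [vars, Finset.mem_union, not_or] at hz
      simp only [rename, oval]
      rw [oval_rename s ρ y z hz.1, oval_rename t ρ y z hz.2]
  | mu w t, ρ, y, z, hz => by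
      simp only [vars, Finset.mem_insert, not_or] at hz
      obtain ⟨hzw, hzt⟩ := hz
      simp only [rename]
      by_cases hwy : w = y
      · subst hwy
        rw [if_pos rfl]; simp only [oval]
        have : (fun a => oval t (Function.update ρ w a)) =
            (fun a => oval t (Function.update (Function.update ρ w (ρ z)) w a)) := by
          funext a; rw [Function.update_idem]
        rw [this]
      · simp only [if_neg hwy, oval]
        have : (fun a => oval (rename y z t) (Function.update ρ w a)) =
            (fun a => oval t (Function.update (Function.update ρ y (ρ z)) w a)) := by
          funext a
          rw [oval_rename t _ y z hzt]
          rw [Function.update_of_ne hzw]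
          rw [Function.update_comm hwy]
        rw [this]

theorem oval_subst : ∀ (t : MuTerm X) (x : X) (u : MuTerm X) (ρ : X → Ordinal),
    oval (subst x u t) ρ = oval t (Function.update ρ x (oval u ρ)) := by
  have key : ∀ (n : ℕ) (t : MuTerm X), t.size ≤ n → ∀ (x : X) (u : MuTerm X) (ρ : X → Ordinal),
      oval (subst x u t) ρ = oval t (Function.update ρ x (oval u ρ)) := by
    intro n
    induction n with
    | zero => intro t ht; exfalso; cases t <;> simp [size] at ht
    | succ n IH =>
      intro t ht x u ρ
      cases t with
      | var p =>
        rw [subst_var]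
        by_cases hp : p = x
        · subst hp; simp [oval]
        · simp [hp, oval, Function.update_of_ne hp]
      | zero => rw [subst_zero]; rfl
      | one => rw [subst_one]; rfl
      | add s t =>
        simp only [size] at ht
        rw [subst_add]
        simp only [oval]
        rw [IH s (by omega) x u ρ, IH t (by omega) x u ρ]
      | mul s t =>
        simp only [size] at ht
        rw [subst_mul]
        simp only [oval]
        rw [IH s (by omega) x u ρ, IH t (by omega) x u ρ]
      | mu w t =>
        simp only [size] at ht
        by_cases hwx : w = x
        · subst hwx
          rw [subst_mu_eq]
          simp only [oval]
          have : (fun a => oval t (Function.update ρ w a)) =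
              (fun a => oval t (Function.update (Function.update ρ w (oval u ρ)) w a)) := by
            funext a; rw [Function.update_idem]
          rw [this]
        · rw [subst_mu_ne x u w t hwx]
          set z := fresh t u x with hzdef
          obtain ⟨hz1, hz2, hz3⟩ := fresh_spec t u x
          simp only [oval]
          have hfun : (fun a => oval (subst x u (rename w z t)) (Function.update ρ z a)) =
              (fun a => oval t (Function.update (Function.update ρ x (oval u ρ)) w a)) := by
            funext a
            rw [IH (rename w z t) (by rw [size_rename]; omega) x u (Function.update ρ z a)]
            have hu : oval u (Function.update ρ z a) = oval u ρ := by
              refine oval_congr u _ _ fun p hp => ?_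
              rw [Function.update_of_ne]
              intro hpz; rw [hpz] at hp; exact hz2 hp
            rw [hu]
            rw [oval_rename t _ w z hz1]
            have hz : (Function.update (Function.update ρ z a) x (oval u ρ)) z = a := by
              rw [Function.update_of_ne hz3, Function.update_self]
            rw [hz]
            refine oval_congr t _ _ fun p hp => ?_
            by_cases hpw : p = w
            · subst hpw; simp
            · rw [Function.update_of_ne hpw, Function.update_of_ne hpw]
              by_cases hpx : p = x
              · subst hpx; simp
              · rw [Function.update_of_ne hpx, Function.update_of_ne hpx]
                rw [Function.update_of_ne]
                intro hpz; rw [hpz] at hp; exact hz1 (fv_subset_vars t hp)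
          rw [hfun]
  intro t; exact key t.size t le_rfl

theorem oval_napprox (n : ℕ) (x : X) (t : MuTerm X) (ρ : X → Ordinal) :
    oval (napprox n x t) ρ = (fun a => oval t (Function.update ρ x a))^[n] 0 := by
  induction n with
  | zero => rfl
  | succ n IH =>
    rw [napprox_succ, oval_subst, Function.iterate_succ_apply', ← IH]

theorem oval_napprox_lt (n : ℕ) (x : X) (t : MuTerm X) (ρ : X → Ordinal) :
    oval (napprox n x t) ρ < oval (mu x t) ρ := by
  rw [oval_napprox]
  show _ < _ + 1
  rw [Ordinal.add_one_eq_succ]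
  rw [Order.lt_succ_iff]
  exact le_ciSup (Ordinal.bddAbove_range _) n

theorem oval_lt_add_left (s t : MuTerm X) (ρ : X → Ordinal) :
    oval s ρ < oval (add s t) ρ := by
  simp only [oval]
  calc oval s ρ ≤ oval s ρ + oval t ρ := le_self_add
    _ < oval s ρ + oval t ρ + 1 := by
        rw [Ordinal.add_one_eq_succ]; exact Order.lt_succ _

theorem oval_lt_add_right (s t : MuTerm X) (ρ : X → Ordinal) :
    oval t ρ < oval (add s t) ρ := by
  simp only [oval]
  calc oval t ρ ≤ oval s ρ + oval t ρ := le_add_self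
    _ < oval s ρ + oval t ρ + 1 := by
        rw [Ordinal.add_one_eq_succ]; exact Order.lt_succ _

theorem oval_lt_mul_left (s t : MuTerm X) (ρ : X → Ordinal) :
    oval s ρ < oval (mul s t) ρ := oval_lt_add_left s t ρ

theorem oval_lt_mul_right (s t : MuTerm X) (ρ : X → Ordinal) :
    oval t ρ < oval (mul s t) ρ := oval_lt_add_right s t ρ

end MuTerm
theorem wordProd_nil {X K : Type} [Monoid K] (v : X → K) : wordProd v [] = 1 := by
  simp [wordProd]

theorem wordProd_singleton {X K : Type} [Monoid K] (v : X → K) (x : X) :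
    wordProd v [x] = v x := by
  simp [wordProd]

theorem wordProd_append {X K : Type} [Monoid K] (v : X → K) (w1 w2 : List X) :
    wordProd v (w1 ++ w2) = wordProd v w1 * wordProd v w2 := by
  simp [wordProd]

/-- for every interpretation `σ` over a μ-continuous Chomsky
algebra `K` and every term `t`, `sup {σ̄(w) : w ∈ L_X(t)}` exists and equals
`σ(t)`. -/
theorem statement7 {X K : Type} [DecidableEq X] [Infinite X] [ChomskyAlgebra K]
    (hK : MuContinuous K) (eval : (X → K) → MuTerm X → K) (hσ : IsInterp eval)
    (v : X → K) (L : MuTerm X → Language X) (hL : IsCanonicalInterp L)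
    (t : MuTerm X) :
    IsLUB {y : K | ∃ w ∈ L t, y = wordProd v w} (eval v t) := by
  obtain ⟨hLang, hLvar⟩ := hL
  have key : ∀ (a : Ordinal.{0}) (t : MuTerm X), MuTerm.oval t (fun _ => 0) = a →
      ∀ c d : K, IsLUB {y : K | ∃ w ∈ L t, y = c * wordProd v w * d}
        (c * eval v t * d) := by
    intro a
    induction a using Ordinal.induction with
    | _ a IH =>
      intro t ht c d
      cases t with
      | var x =>
        rw [hσ.var, hLvar]
        have hset : {y : K | ∃ w ∈ ({[x]} : Language X), y = c * wordProd v w * d}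
            = {c * v x * d} := by
          ext y
          simp only [Set.mem_setOf_eq, Set.mem_singleton_iff]
          constructor
          · rintro ⟨w, hw, rfl⟩
            replace hw : w = [x] := hw
            subst hw
            rw [wordProd_singleton]
          · rintro rfl
            exact ⟨[x], rfl, by rw [wordProd_singleton]⟩
        rw [hset]
        exact isLUB_singleton
      | zero =>
        rw [hσ.zero, hLang.zero]
        have hset : {y : K | ∃ w ∈ (0 : Language X), y = c * wordProd v w * d}
            = (∅ : Set K) := by
          ext y
          simp [Language.notMem_zero]
        rw [hset, mul_zero, zero_mul, ← bot_eq_zero]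
        exact isLUB_empty
      | one =>
        rw [hσ.one, hLang.one]
        have hset : {y : K | ∃ w ∈ (1 : Language X), y = c * wordProd v w * d}
            = {c * 1 * d} := by
          ext y
          simp only [Set.mem_setOf_eq, Set.mem_singleton_iff]
          constructor
          · rintro ⟨w, hw, rfl⟩
            rw [Language.mem_one] at hw
            subst hw
            rw [wordProd_nil]
          · rintro rfl
            exact ⟨[], (Language.mem_one _).2 rfl, by rw [wordProd_nil]⟩
        rw [hset]
        exact isLUB_singleton
      | add s t' =>
        rw [hσ.add, hLang.add]
        have hs := IH _ (ht ▸ MuTerm.oval_lt_add_left s t' _) s rfl c d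
        have ht2 := IH _ (ht ▸ MuTerm.oval_lt_add_right s t' _) t' rfl c d
        have hset : {y : K | ∃ w ∈ L s + L t', y = c * wordProd v w * d}
            = {y : K | ∃ w ∈ L s, y = c * wordProd v w * d}
              ∪ {y : K | ∃ w ∈ L t', y = c * wordProd v w * d} := by
          ext y
          simp only [Set.mem_setOf_eq, Set.mem_union]
          constructor
          · rintro ⟨w, hw, rfl⟩
            rcases (Language.mem_add _ _ _).1 hw with h | h
            · exact Or.inl ⟨w, h, rfl⟩
            · exact Or.inr ⟨w, h, rfl⟩
          · rintro (⟨w, hw, rfl⟩ | ⟨w, hw, rfl⟩)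
            · exact ⟨w, (Language.mem_add _ _ _).2 (Or.inl hw), rfl⟩
            · exact ⟨w, (Language.mem_add _ _ _).2 (Or.inr hw), rfl⟩
        rw [hset]
        have hval : c * (eval v s + eval v t') * d
            = (c * eval v s * d) ⊔ (c * eval v t' * d) := by
          rw [mul_add, add_mul, add_eq_sup]
        rw [hval]
        exact hs.union ht2
      | mul s t' =>
        rw [hσ.mul, hLang.mul]
        have hs : MuTerm.oval s (fun _ => (0 : Ordinal.{0})) < a := ht ▸ MuTerm.oval_lt_mul_left s t' _
        have ht2 : MuTerm.oval t' (fun _ => (0 : Ordinal.{0})) < a := ht ▸ MuTerm.oval_lt_mul_right s t' _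
        constructor
        · rintro y ⟨w, hw, rfl⟩
          rcases Language.mem_mul.1 hw with ⟨w1, hw1, w2, hw2, rfl⟩
          have h1 : (c * wordProd v w1) * wordProd v w2 * d
              ≤ (c * wordProd v w1) * eval v t' * d :=
            (IH _ ht2 t' rfl (c * wordProd v w1) d).1 ⟨w2, hw2, rfl⟩
          have h2 : c * wordProd v w1 * (eval v t' * d)
              ≤ c * eval v s * (eval v t' * d) :=
            (IH _ hs s rfl c (eval v t' * d)).1 ⟨w1, hw1, rfl⟩
          calc c * wordProd v (w1 ++ w2) * d
              = (c * wordProd v w1) * wordProd v w2 * d := by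
                rw [wordProd_append, ← mul_assoc]
            _ ≤ (c * wordProd v w1) * eval v t' * d := h1
            _ = c * wordProd v w1 * (eval v t' * d) := by rw [mul_assoc]
            _ ≤ c * eval v s * (eval v t' * d) := h2
            _ = c * (eval v s * eval v t') * d := by
                rw [mul_assoc, mul_assoc, mul_assoc]
        · intro u hu
          have H1 : ∀ w1 ∈ L s, c * wordProd v w1 * (eval v t' * d) ≤ u := by
            intro w1 hw1
            have hub : (c * wordProd v w1) * eval v t' * d ≤ u := by
              refine (IH _ ht2 t' rfl (c * wordProd v w1) d).2 ?_
              rintro y ⟨w2, hw2, rfl⟩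
              refine hu ⟨w1 ++ w2, Language.mem_mul.2 ⟨w1, hw1, w2, hw2, rfl⟩, ?_⟩
              rw [wordProd_append, ← mul_assoc]
            rw [← mul_assoc]
            exact hub
          have hub2 : c * eval v s * (eval v t' * d) ≤ u := by
            refine (IH _ hs s rfl c (eval v t' * d)).2 ?_
            rintro y ⟨w1, hw1, rfl⟩
            exact H1 w1 hw1
          calc c * (eval v s * eval v t') * d
              = c * eval v s * (eval v t' * d) := by
                rw [mul_assoc, mul_assoc, mul_assoc]
            _ ≤ u := hub2
      | mu x t' =>
        have hlub := hK X eval hσ v c d x t'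
        constructor
        · rintro y ⟨w, hw, rfl⟩
          rw [hLang.mu] at hw
          obtain ⟨n, hn⟩ := Language.mem_iSup.1 hw
          have hIH := IH _ (ht ▸ MuTerm.oval_napprox_lt n x t' _)
            (MuTerm.napprox n x t') rfl c d
          exact le_trans (hIH.1 ⟨w, hn, rfl⟩) (hlub.1 ⟨n, rfl⟩)
        · intro u hu
          refine hlub.2 ?_
          rintro y ⟨n, rfl⟩
          have hIH := IH _ (ht ▸ MuTerm.oval_napprox_lt n x t' _)
            (MuTerm.napprox n x t') rfl c d
          refine hIH.2 ?_
          rintro y' ⟨w, hw, rfl⟩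
          refine hu ⟨w, ?_, rfl⟩
          rw [hLang.mu]
          exact Language.mem_iSup.2 ⟨n, hw⟩
  have h := key _ t rfl 1 1
  simpa only [one_mul, mul_one] using h
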